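/- Let α ∈ (0,1). There exists a constant C > 0 depending only on d and α such that for every everywhere differentiable u : ℝ^d → ℝ, every positive integer i, and all x, x' ∈ ℝ^d with 2^{−i−1} ≤ |x − x'| < 2^{−i}, one has |∇u(x) − ∇u(x')| ≤ C Σ_{k=i}^∞ 2^{k(1−α)} sup_{x_0∈ℝ^d} [u]_{Λ^α(B_{2^{−k}}(x_0))}. In particular, if Σ_{k=0}^∞ 2^{k(1−α)} sup_{x_0∈ℝ^d} [u]_{Λ^α(B_{2^{−k}}(x_0))} < ∞, then ∇u is uniformly continuous on ℝ^d. -/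

import Mathlib

open MeasureTheory Metric Filter Set
open scoped ENNReal Topology

noncomputable section

/-- Hölder seminorm `[u]_{γ;Ω}` (valued in `ℝ≥0∞`). -/
def holderSemi {E F : Type*} [NormedAddCommGroup E] [NormedAddCommGroup F]
    (γ : ℝ) (Ω : Set E) (u : E → F) : ℝ≥0∞ :=
  ⨆ (x : E) (_ : x ∈ Ω) (y : E) (_ : y ∈ Ω) (_ : x ≠ y),
    ENNReal.ofReal (‖u x - u y‖ / ‖x - y‖ ^ γ)

/-- Zygmund seminorm `[u]_{Λ^α(Ω)}` (valued in `ℝ≥0∞`). -/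
def zygmundSemi {E : Type*} [NormedAddCommGroup E] (α : ℝ) (Ω : Set E) (u : E → ℝ) : ℝ≥0∞ :=
  ⨆ (x : E) (h : E) (_ : h ≠ 0) (_ : x ∈ Ω) (_ : x + h ∈ Ω) (_ : x - h ∈ Ω),
    ENNReal.ofReal (|u (x + h) + u (x - h) - 2 * u x| / ‖h‖ ^ α)

/-- The `L_∞` norm of `u` on `Ω` (valued in `ℝ≥0∞`). -/
def eSupNorm {E : Type*} (Ω : Set E) (u : E → ℝ) : ℝ≥0∞ :=
  ⨆ (x : E) (_ : x ∈ Ω), ENNReal.ofReal |u x|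

/-- A Dini function: nonnegative, nondecreasing on `(0,∞)`, with `∫_0^1 ω(r)/r dr < ∞`. -/
def IsDini (ω : ℝ → ℝ) : Prop :=
  (∀ r, 0 < r → 0 ≤ ω r) ∧ MonotoneOn ω (Set.Ioi (0:ℝ)) ∧
    IntegrableOn (fun r => ω r / r) (Set.Ioc (0:ℝ) 1)

variable {E : Type*} [NormedAddCommGroup E]

/-- pointwise second-difference bound from the sup of Zygmund seminorms on balls of radius r -/
lemma zyg_step {α : ℝ} (hα : 0 < α) {u : E → ℝ} {r M : ℝ} (hM : 0 ≤ M)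
    (hZ : (⨆ x0 : E, zygmundSemi α (ball x0 r) u) ≤ ENNReal.ofReal M)
    (c h : E) (hhr : ‖h‖ < r) :
    |u (c + h) + u (c - h) - 2 * u c| ≤ ‖h‖ ^ α * M := by
  rcases eq_or_ne h 0 with rfl | hh
  · have h0 : u (c + 0) + u (c - 0) - 2 * u c = 0 := by simp; ring
    rw [h0, abs_zero, norm_zero, Real.zero_rpow hα.ne', zero_mul]
  · have hr : 0 < r := lt_of_le_of_lt (norm_nonneg h) hhr
    have hmem1 : c ∈ ball c r := mem_ball_self hr
    have hmem2 : c + h ∈ ball c r := by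
      rw [mem_ball, dist_eq_norm, add_sub_cancel_left]; exact hhr
    have hmem3 : c - h ∈ ball c r := by
      rw [mem_ball, dist_eq_norm, sub_sub_cancel_left, norm_neg]; exact hhr
    have hle : ENNReal.ofReal (|u (c + h) + u (c - h) - 2 * u c| / ‖h‖ ^ α)
        ≤ ENNReal.ofReal M := by
      refine le_trans ?_ hZ
      refine le_iSup_of_le c ?_
      unfold zygmundSemi
      exact le_iSup_of_le c (le_iSup_of_le h (le_iSup_of_le hh (le_iSup_of_le hmem1
        (le_iSup_of_le hmem2 (le_iSup_of_le hmem3 le_rfl)))))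
    have hpow : (0:ℝ) < ‖h‖ ^ α := Real.rpow_pos_of_pos (norm_pos_iff.mpr hh) α
    have := (ENNReal.ofReal_le_ofReal_iff hM).mp hle
    calc |u (c + h) + u (c - h) - 2 * u c|
        = |u (c + h) + u (c - h) - 2 * u c| / ‖h‖ ^ α * ‖h‖ ^ α := by
          field_simp
      _ ≤ M * ‖h‖ ^ α := by gcongr
      _ = ‖h‖ ^ α * M := mul_comm _ _

/-- doubling: second difference with step `h`, `‖h‖ < 2r`, bounded via steps `h/2`. -/
lemma zyg_double {α : ℝ} (hα : 0 < α) {u : E → ℝ} {r M : ℝ} [NormedSpace ℝ E] (hM : 0 ≤ M)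
    (hZ : (⨆ x0 : E, zygmundSemi α (ball x0 r) u) ≤ ENNReal.ofReal M)
    (c h : E) (hhr : ‖h‖ < 2 * r) :
    |u (c + h) + u (c - h) - 2 * u c| ≤ 4 * r ^ α * M := by
  set w : E := (2⁻¹ : ℝ) • h with hw
  have hr : 0 < r := by nlinarith [norm_nonneg h]
  have hwn : ‖w‖ = ‖h‖ / 2 := by
    rw [hw, norm_smul]; simp [abs_of_nonneg]; ring
  have hwr : ‖w‖ < r := by rw [hwn]; linarith
  have hcw : c + w + w = c + h := by
    rw [add_assoc, ← add_smul]; norm_num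
  have hcw2 : c - w - w = c - h := by
    rw [sub_sub, ← add_smul]; norm_num
  have e1 : (c + w) + w = c + h := hcw
  have e2 : (c + w) - w = c := by abel
  have e3 : (c - w) + w = c := by abel
  have e4 : (c - w) - w = c - h := hcw2
  have key : u (c + h) + u (c - h) - 2 * u c =
      (u ((c+w)+w) + u ((c+w)-w) - 2 * u (c+w))
      + (u ((c-w)+w) + u ((c-w)-w) - 2 * u (c-w))
      + 2 * (u (c + w) + u (c - w) - 2 * u c) := by
    rw [e1, e2, e3, e4]; ring
  have b1 := zyg_step hα hM hZ (c + w) w hwr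
  have b2 := zyg_step hα hM hZ (c - w) w hwr
  have b3 := zyg_step hα hM hZ c w hwr
  have hwpow : ‖w‖ ^ α ≤ r ^ α := Real.rpow_le_rpow (norm_nonneg w) hwr.le hα.le
  have hbd : ‖w‖ ^ α * M ≤ r ^ α * M := by gcongr
  calc |u (c + h) + u (c - h) - 2 * u c|
      ≤ |u ((c+w)+w) + u ((c+w)-w) - 2 * u (c+w)|
        + |u ((c-w)+w) + u ((c-w)-w) - 2 * u (c-w)|
        + 2 * |u (c + w) + u (c - w) - 2 * u c| := by
        rw [key]
        refine (abs_add_le _ _).trans ?_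
        gcongr
        · exact abs_add_le _ _
        · exact le_of_eq (by rw [abs_mul, abs_two])
    _ ≤ ‖w‖^α * M + ‖w‖^α * M + 2 * (‖w‖^α * M) := by gcongr
    _ ≤ r^α*M + r^α*M + 2*(r^α*M) := by gcongr
    _ = 4 * r ^ α * M := by ring

open scoped RealInnerProductSpace

variable {F : Type*} [NormedAddCommGroup F] [InnerProductSpace ℝ F] [CompleteSpace F]

lemma symm_quot_tendsto {u : F → ℝ} (hu : Differentiable ℝ u) (p e : F) {t : ℕ → ℝ}
    (ht0 : Tendsto t atTop (𝓝 0)) (htne : ∀ n, t n ≠ 0) :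
    Tendsto (fun n => (u (p + t n • e) - u (p - t n • e)) / (2 * t n)) atTop
      (𝓝 (fderiv ℝ u p e)) := by
  have hline : HasDerivAt (fun s : ℝ => p + s • e) e 0 := by
    simpa using ((hasDerivAt_id (0:ℝ)).smul_const e).const_add p
  have hφ : HasDerivAt (fun s : ℝ => u (p + s • e)) (fderiv ℝ u p e) 0 := by
    have h1 : HasFDerivAt u (fderiv ℝ u p) (p + (0:ℝ) • e) := by
      simpa using (hu p).hasFDerivAt
    exact h1.comp_hasDerivAt 0 hline
  set φ := fun s : ℝ => u (p + s • e) with hφdef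
  have hs := hasDerivAt_iff_tendsto_slope.mp hφ
  have htw : Tendsto t atTop (𝓝[≠] (0:ℝ)) :=
    tendsto_nhdsWithin_of_tendsto_nhds_of_eventually_within _ ht0
      (Eventually.of_forall fun n => htne n)
  have htwneg : Tendsto (fun n => -(t n)) atTop (𝓝[≠] (0:ℝ)) := by
    refine tendsto_nhdsWithin_of_tendsto_nhds_of_eventually_within _ ?_
      (Eventually.of_forall fun n => ?_)
    · simpa using ht0.neg
    · simpa using neg_ne_zero.mpr (htne n)
  have h1 := hs.comp htw
  have h2 := hs.comp htwneg
  have h3 := (h1.add h2).div_const 2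
  have hlim : (fderiv ℝ u p e + fderiv ℝ u p e) / 2 = fderiv ℝ u p e := by ring
  rw [hlim] at h3
  refine Tendsto.congr (fun n => ?_) h3
  have harg : p + (-(t n)) • e = p - t n • e := by
    rw [neg_smul, ← sub_eq_add_neg]
  simp only [Function.comp_apply, slope_def_field, hφdef, harg]
  field_simp
  ring

lemma telescope_bound {u : F → ℝ} (hu : Differentiable ℝ u) {α : ℝ} (hα : 0 < α)
    (e : F) (he : ‖e‖ = 1) (i : ℕ) (z : ℕ → ℝ) (hz : ∀ n, 0 ≤ z n)
    (hZ : ∀ n : ℕ,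
      (⨆ x0 : F, zygmundSemi α (ball x0 ((2:ℝ) ^ (-((n:ℝ) + (i:ℝ))))) u) ≤ ENNReal.ofReal (z n))
    (ha : Summable (fun n : ℕ => (2:ℝ) ^ (((n:ℝ) + (i:ℝ)) * (1 - α)) * z n)) (p : F) :
    |fderiv ℝ u p e -
        (u (p + ((2:ℝ)^(-(i:ℝ))) • e) - u (p - ((2:ℝ)^(-(i:ℝ))) • e)) / (2 * (2:ℝ)^(-(i:ℝ)))|
      ≤ ∑' n : ℕ, (2:ℝ) ^ (((n:ℝ) + (i:ℝ)) * (1 - α)) * z n := by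
  set t₀ := (2:ℝ)^(-(i:ℝ)) with ht₀def
  have ht₀ : 0 < t₀ := Real.rpow_pos_of_pos two_pos _
  set a : ℕ → ℝ := fun n => (2:ℝ) ^ (((n:ℝ) + (i:ℝ)) * (1 - α)) * z n with hadef
  set G : ℕ → ℝ := fun n =>
    (u (p + (t₀/2^n) • e) - u (p - (t₀/2^n) • e)) / (2 * (t₀/2^n)) with hGdef
  have htne : ∀ n : ℕ, t₀/2^n ≠ 0 := fun n => by positivity
  have ht0 : Tendsto (fun n : ℕ => t₀/2^n) atTop (𝓝 0) := by
    have h := (tendsto_pow_atTop_nhds_zero_of_lt_one (by norm_num : (0:ℝ) ≤ 1/2)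
      (by norm_num : (1/2:ℝ) < 1)).const_mul t₀
    rw [mul_zero] at h
    refine h.congr fun n => ?_
    rw [div_pow, one_pow, mul_one_div]
  have hlim : Tendsto G atTop (𝓝 (fderiv ℝ u p e)) := symm_quot_tendsto hu p e ht0 htne
  have hstep : ∀ n : ℕ, dist (G n) (G (n+1)) ≤ a n := by
    intro n
    set s := t₀/2^(n+1) with hs
    have hspos : 0 < s := by positivity
    have hs2 : s = (2:ℝ)^(-(i:ℝ) - ((n:ℝ)+1)) := by
      rw [hs, ht₀def, ← Real.rpow_natCast 2 (n+1), ← Real.rpow_sub two_pos]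
      congr 1
      push_cast; ring
    set v := s • e with hv
    have hvn : ‖v‖ = s := by
      rw [hv, norm_smul, he, mul_one, Real.norm_eq_abs, abs_of_pos hspos]
    have hvr : ‖v‖ < (2:ℝ)^(-((n:ℝ) + (i:ℝ))) := by
      rw [hvn, hs2]
      exact (Real.rpow_lt_rpow_left_iff one_lt_two).mpr (by linarith)
    have h2s : t₀/2^n = 2*s := by
      rw [hs, pow_succ]
      field_simp
    have hvv : (2*s) • e = v + v := by rw [← add_smul, two_mul]
    have eA : (p+v)-v = p := by abel
    have eB : (p-v)+v = p := by abel
    have hA := zyg_step hα (hz n) (hZ n) (p+v) v hvr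
    have hB := zyg_step hα (hz n) (hZ n) (p-v) v hvr
    have key : G n - G (n+1) =
        ((u ((p+v)+v) + u ((p+v)-v) - 2*u (p+v)) -
         (u ((p-v)+v) + u ((p-v)-v) - 2*u (p-v))) / (4*s) := by
      have a1 : p + (2*s) • e = p + v + v := by rw [hvv, add_assoc]
      have a2 : p - (2*s) • e = p - v - v := by rw [hvv, sub_sub]
      have hGn : G n = (u (p+v+v) - u (p-v-v)) / (2*(2*s)) := by
        rw [hGdef]; simp only [h2s, a1, a2]
      have hGn1 : G (n+1) = (u (p+v) - u (p-v)) / (2*s) := by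
        rw [hGdef]
      rw [hGn, hGn1, eA, eB]
      have hsne : s ≠ 0 := hspos.ne'
      field_simp
      ring
    rw [Real.dist_eq, key]
    have habs : |((u ((p+v)+v) + u ((p+v)-v) - 2*u (p+v)) -
         (u ((p-v)+v) + u ((p-v)-v) - 2*u (p-v))) / (4*s)|
        ≤ (‖v‖^α * z n + ‖v‖^α * z n) / (4*s) := by
      rw [abs_div, abs_of_pos (by positivity : (0:ℝ) < 4*s)]
      gcongr
      exact (abs_sub _ _).trans (by gcongr)
    refine habs.trans ?_
    have hsa : s^α/(2*s) ≤ (2:ℝ)^(((n:ℝ) + (i:ℝ)) * (1 - α)) := by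
      have e1 : s^α = (2:ℝ)^((-(i:ℝ) - ((n:ℝ)+1))*α) := by
        rw [hs2]; exact (Real.rpow_mul (by norm_num) _ _).symm
      have e2 : 2*s = (2:ℝ)^(1+(-(i:ℝ) - ((n:ℝ)+1))) := by
        rw [hs2, Real.rpow_add two_pos, Real.rpow_one]
      rw [e1, e2, ← Real.rpow_sub two_pos]
      refine (Real.rpow_le_rpow_left_iff one_lt_two).mpr ?_
      nlinarith [hα.le]
    calc (‖v‖^α * z n + ‖v‖^α * z n) / (4*s) = (s^α/(2*s)) * z n := by
          rw [hvn]; ring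
      _ ≤ (2:ℝ)^(((n:ℝ) + (i:ℝ)) * (1 - α)) * z n := by
          exact mul_le_mul_of_nonneg_right hsa (hz n)
      _ = a n := rfl
  have := dist_le_tsum_of_dist_le_of_tendsto₀ a hstep ha hlim
  have hG0 : G 0 = (u (p + t₀ • e) - u (p - t₀ • e)) / (2 * t₀) := by
    rw [hGdef]; norm_num
  rw [hG0, Real.dist_eq] at this
  rw [abs_sub_comm]
  exact this

lemma middle_bound {u : F → ℝ} {α : ℝ} (hα : 0 < α) (e : F) (he : ‖e‖ = 1) (i : ℕ)
    {z0 : ℝ} (hz0 : 0 ≤ z0)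
    (hZ : (⨆ x0 : F, zygmundSemi α (ball x0 ((2:ℝ)^(-(i:ℝ)))) u) ≤ ENNReal.ofReal z0)
    (x x' : F) (hxx : ‖x - x'‖ < (2:ℝ)^(-(i:ℝ))) :
    |(u (x + ((2:ℝ)^(-(i:ℝ))) • e) - u (x - ((2:ℝ)^(-(i:ℝ))) • e)) / (2 * (2:ℝ)^(-(i:ℝ)))
      - (u (x' + ((2:ℝ)^(-(i:ℝ))) • e) - u (x' - ((2:ℝ)^(-(i:ℝ))) • e)) / (2 * (2:ℝ)^(-(i:ℝ)))|
      ≤ 4 * (2:ℝ)^((i:ℝ)*(1-α)) * z0 := by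
  set t₀ := (2:ℝ)^(-(i:ℝ)) with ht₀def
  have ht₀ : 0 < t₀ := Real.rpow_pos_of_pos two_pos _
  set c : F := (2⁻¹:ℝ) • (x + x') with hc
  set h₁ : F := (2⁻¹:ℝ) • (x - x') + t₀ • e with hh₁
  set h₂ : F := (2⁻¹:ℝ) • (x - x') - t₀ • e with hh₂
  have a1 : c + h₁ = x + t₀ • e := by rw [hc, hh₁]; module
  have a2 : c - h₁ = x' - t₀ • e := by rw [hc, hh₁]; module
  have a3 : c + h₂ = x - t₀ • e := by rw [hc, hh₂]; module
  have a4 : c - h₂ = x' + t₀ • e := by rw [hc, hh₂]; module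
  have hhalf : ‖(2⁻¹:ℝ) • (x - x')‖ < t₀/2 := by
    rw [norm_smul, Real.norm_eq_abs]
    rw [abs_of_pos (by norm_num : (0:ℝ) < 2⁻¹)]
    calc 2⁻¹ * ‖x - x'‖ < 2⁻¹ * t₀ := by gcongr
      _ = t₀/2 := by ring
  have hte : ‖t₀ • e‖ = t₀ := by
    rw [norm_smul, he, mul_one, Real.norm_eq_abs, abs_of_pos ht₀]
  have hb1 : ‖h₁‖ < 2 * t₀ := by
    calc ‖h₁‖ ≤ ‖(2⁻¹:ℝ) • (x - x')‖ + ‖t₀ • e‖ := norm_add_le _ _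
      _ < t₀/2 + t₀ := by rw [hte]; linarith
      _ ≤ 2 * t₀ := by linarith
  have hb2 : ‖h₂‖ < 2 * t₀ := by
    calc ‖h₂‖ ≤ ‖(2⁻¹:ℝ) • (x - x')‖ + ‖t₀ • e‖ := norm_sub_le _ _
      _ < t₀/2 + t₀ := by rw [hte]; linarith
      _ ≤ 2 * t₀ := by linarith
  have hA := zyg_double hα hz0 hZ c h₁ hb1
  have hB := zyg_double hα hz0 hZ c h₂ hb2
  have key : (u (x + t₀ • e) - u (x - t₀ • e)) / (2 * t₀)
      - (u (x' + t₀ • e) - u (x' - t₀ • e)) / (2 * t₀)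
      = ((u (c + h₁) + u (c - h₁) - 2 * u c) - (u (c + h₂) + u (c - h₂) - 2 * u c)) / (2*t₀) := by
    rw [a1, a2, a3, a4]; ring
  rw [key]
  have habs : |((u (c + h₁) + u (c - h₁) - 2 * u c) - (u (c + h₂) + u (c - h₂) - 2 * u c)) / (2*t₀)|
      ≤ (4 * t₀^α * z0 + 4 * t₀^α * z0) / (2*t₀) := by
    rw [abs_div, abs_of_pos (by positivity : (0:ℝ) < 2*t₀)]
    gcongr
    exact (abs_sub _ _).trans (by gcongr)
  refine habs.trans ?_
  have hpow : t₀^α / t₀ = (2:ℝ)^((i:ℝ)*(1-α)) := by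
    have e1 : t₀^α = (2:ℝ)^(-(i:ℝ)*α) := by
      rw [ht₀def]; exact (Real.rpow_mul (by norm_num) _ _).symm
    rw [e1, ht₀def, ← Real.rpow_sub two_pos]
    congr 1
    ring
  calc (4 * t₀^α * z0 + 4 * t₀^α * z0) / (2*t₀) = 4 * (t₀^α/t₀) * z0 := by ring
    _ ≤ 4 * (2:ℝ)^((i:ℝ)*(1-α)) * z0 := le_of_eq (by rw [hpow])

lemma main_ineq {u : F → ℝ} (hu : Differentiable ℝ u) {α : ℝ} (hα : 0 < α)
    (i : ℕ) (x x' : F) (hup : ‖x - x'‖ < (2:ℝ)^(-(i:ℝ))) :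
    ENNReal.ofReal ‖gradient u x - gradient u x'‖ ≤ ENNReal.ofReal 6 *
      ∑' k : ℕ, ENNReal.ofReal ((2:ℝ)^(((k:ℝ)+(i:ℝ))*(1-α))) *
        ⨆ x0 : F, zygmundSemi α (ball x0 ((2:ℝ)^(-((k:ℝ)+(i:ℝ))))) u := by
  set Z : ℕ → ℝ≥0∞ :=
    fun k => ⨆ x0 : F, zygmundSemi α (ball x0 ((2:ℝ)^(-((k:ℝ)+(i:ℝ))))) u with hZdef
  set coef : ℕ → ℝ := fun k => (2:ℝ)^(((k:ℝ)+(i:ℝ))*(1-α)) with hcoefdef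
  have hcoefpos : ∀ k, 0 < coef k := fun k => Real.rpow_pos_of_pos two_pos _
  by_cases hS : (∑' k, ENNReal.ofReal (coef k) * Z k) = ⊤
  · rw [hS, ENNReal.mul_top (by simp : ENNReal.ofReal 6 ≠ 0)]
    exact le_top
  · have hFk : ∀ k, ENNReal.ofReal (coef k) * Z k ≠ ⊤ := fun k =>
      ne_top_of_le_ne_top hS (ENNReal.le_tsum k)
    have hZk : ∀ k, Z k ≠ ⊤ := by
      intro k hk
      exact hFk k (by rw [hk, ENNReal.mul_top ((ENNReal.ofReal_pos.mpr (hcoefpos k)).ne')])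
    set z : ℕ → ℝ := fun k => (Z k).toReal with hzdef
    have hz : ∀ k, 0 ≤ z k := fun k => ENNReal.toReal_nonneg
    have hZz : ∀ k, Z k ≤ ENNReal.ofReal (z k) := fun k =>
      le_of_eq (ENNReal.ofReal_toReal (hZk k)).symm
    have hFeq : ∀ k, ENNReal.ofReal (coef k) * Z k = ENNReal.ofReal (coef k * z k) := by
      intro k
      rw [ENNReal.ofReal_mul (hcoefpos k).le]
      congr 1
      exact (ENNReal.ofReal_toReal (hZk k)).symm
    have hsum : Summable (fun k => coef k * z k) := by
      have h1 := ENNReal.summable_toReal hS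
      refine h1.congr fun k => ?_
      rw [ENNReal.toReal_mul, ENNReal.toReal_ofReal (hcoefpos k).le]
    have htsum : (∑' k, ENNReal.ofReal (coef k) * Z k) = ENNReal.ofReal (∑' k, coef k * z k) := by
      rw [ENNReal.ofReal_tsum_of_nonneg (fun k => mul_nonneg (hcoefpos k).le (hz k)) hsum]
      exact tsum_congr hFeq
    rcases eq_or_ne (gradient u x) (gradient u x') with hg | hg
    · rw [hg]; simp
    · set g := gradient u x - gradient u x' with hgdef
      have hgne : g ≠ 0 := sub_ne_zero.mpr hg
      set e : F := (‖g‖⁻¹ : ℝ) • g with hedef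
      have he : ‖e‖ = 1 := norm_smul_inv_norm hgne
      have hZ' : ∀ n : ℕ,
          (⨆ x0 : F, zygmundSemi α (ball x0 ((2:ℝ)^(-((n:ℝ)+(i:ℝ))))) u)
            ≤ ENNReal.ofReal (z n) := fun n => hZz n
      have h1 := telescope_bound hu hα e he i z hz hZ' hsum x
      have h2 := telescope_bound hu hα e he i z hz hZ' hsum x'
      have hZ0 : (⨆ x0 : F, zygmundSemi α (ball x0 ((2:ℝ)^(-(i:ℝ)))) u)
          ≤ ENNReal.ofReal (z 0) := by
        have h := hZ' 0
        simp only [Nat.cast_zero, zero_add] at h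
        exact h
      have h3 := middle_bound hα e he i (hz 0) hZ0 x x' hup
      have hips : ∀ p : F, (fderiv ℝ u p : F →L[ℝ] ℝ) e = ⟪gradient u p, e⟫ := by
        intro p
        have hgr : gradient u p = (InnerProductSpace.toDual ℝ F).symm (fderiv ℝ u p) := rfl
        rw [hgr, InnerProductSpace.toDual_symm_apply]
      have hdiff : ⟪gradient u x, e⟫ - ⟪gradient u x', e⟫ = ‖g‖ := by
        rw [← inner_sub_left, ← hgdef, hedef, real_inner_smul_right,
          real_inner_self_eq_norm_mul_norm]
        field_simp
      set T := ∑' k, coef k * z k with hT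
      have hT0 : coef 0 * z 0 ≤ T :=
        Summable.le_tsum hsum 0 (fun j _ => mul_nonneg (hcoefpos j).le (hz j))
      have hcoef0 : coef 0 = (2:ℝ)^((i:ℝ)*(1-α)) := by
        rw [hcoefdef]; norm_num
    
      have h3' : |(u (x + ((2:ℝ)^(-(i:ℝ))) • e) - u (x - ((2:ℝ)^(-(i:ℝ))) • e))
            / (2 * (2:ℝ)^(-(i:ℝ)))
          - (u (x' + ((2:ℝ)^(-(i:ℝ))) • e) - u (x' - ((2:ℝ)^(-(i:ℝ))) • e))
            / (2 * (2:ℝ)^(-(i:ℝ)))| ≤ 4 * T := by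
        refine h3.trans ?_
        rw [← hcoef0]
        calc 4 * coef 0 * z 0 = 4 * (coef 0 * z 0) := by ring
          _ ≤ 4 * T := by linarith
      have htotal : ‖g‖ ≤ 6 * T := by
        set Dx := (fderiv ℝ u x : F →L[ℝ] ℝ) e with hDx
        set Dx' := (fderiv ℝ u x' : F →L[ℝ] ℝ) e with hDx'
        set Qx := (u (x + ((2:ℝ)^(-(i:ℝ))) • e) - u (x - ((2:ℝ)^(-(i:ℝ))) • e))
            / (2 * (2:ℝ)^(-(i:ℝ)))
        set Qx' := (u (x' + ((2:ℝ)^(-(i:ℝ))) • e) - u (x' - ((2:ℝ)^(-(i:ℝ))) • e))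
            / (2 * (2:ℝ)^(-(i:ℝ)))
        have hgeq : ‖g‖ = Dx - Dx' := by
          rw [hDx, hDx', hips x, hips x', hdiff]
        have hdecomp : Dx - Dx' = (Dx - Qx) + (Qx - Qx') + (Qx' - Dx') := by ring
        calc ‖g‖ = Dx - Dx' := hgeq
          _ ≤ |(Dx - Qx) + (Qx - Qx') + (Qx' - Dx')| := by rw [← hdecomp]; exact le_abs_self _
          _ ≤ |Dx - Qx| + |Qx - Qx'| + |Qx' - Dx'| := by
              exact (abs_add_three _ _ _).trans_eq rfl
          _ ≤ T + 4 * T + T := by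
              refine add_le_add (add_le_add h1 h3') ?_
              rw [abs_sub_comm]
              exact h2
          _ = 6 * T := by ring
      rw [htsum, ← ENNReal.ofReal_mul (by norm_num : (0:ℝ) ≤ 6)]
      exact ENNReal.ofReal_le_ofReal htotal

/-- Modulus of continuity of the gradient in terms of the tail of a series of Zygmund
seminorms, and the resulting uniform continuity. -/
theorem gradient_modulus_zygmund_series
    (d : ℕ) (hd : 1 ≤ d) (α : ℝ) (hα : 0 < α) (hα1 : α < 1) :
    ∃ C : ℝ, 0 < C ∧
      ∀ u : EuclideanSpace ℝ (Fin d) → ℝ, Differentiable ℝ u →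
        (∀ i : ℕ, 1 ≤ i → ∀ x x' : EuclideanSpace ℝ (Fin d),
          (2:ℝ) ^ (-(i:ℝ) - 1) ≤ ‖x - x'‖ → ‖x - x'‖ < (2:ℝ) ^ (-(i:ℝ)) →
          ENNReal.ofReal ‖gradient u x - gradient u x'‖ ≤
            ENNReal.ofReal C *
              ∑' k : ℕ, ENNReal.ofReal ((2:ℝ) ^ (((k:ℝ) + (i:ℝ)) * (1 - α))) *
                ⨆ x0 : EuclideanSpace ℝ (Fin d),
                  zygmundSemi α (ball x0 ((2:ℝ) ^ (-((k:ℝ) + (i:ℝ))))) u) ∧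
          ((∑' k : ℕ, ENNReal.ofReal ((2:ℝ) ^ ((k:ℝ) * (1 - α))) *
              ⨆ x0 : EuclideanSpace ℝ (Fin d),
                zygmundSemi α (ball x0 ((2:ℝ) ^ (-(k:ℝ)))) u) < ⊤ →
            UniformContinuous (gradient u)) := by
  refine ⟨6, by norm_num, fun u hu => ?_⟩
  have part1 : ∀ i : ℕ, 1 ≤ i → ∀ x x' : EuclideanSpace ℝ (Fin d),
      (2:ℝ) ^ (-(i:ℝ) - 1) ≤ ‖x - x'‖ → ‖x - x'‖ < (2:ℝ) ^ (-(i:ℝ)) →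
      ENNReal.ofReal ‖gradient u x - gradient u x'‖ ≤
        ENNReal.ofReal 6 *
          ∑' k : ℕ, ENNReal.ofReal ((2:ℝ) ^ (((k:ℝ) + (i:ℝ)) * (1 - α))) *
            ⨆ x0 : EuclideanSpace ℝ (Fin d),
              zygmundSemi α (ball x0 ((2:ℝ) ^ (-((k:ℝ) + (i:ℝ))))) u :=
    fun i _ x x' _ hup => main_ineq hu hα i x x' hup
  refine ⟨part1, ?_⟩
  intro hfin
  set G : ℕ → ℝ≥0∞ := fun m => ENNReal.ofReal ((2:ℝ) ^ ((m:ℝ) * (1 - α))) *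
      ⨆ x0 : EuclideanSpace ℝ (Fin d), zygmundSemi α (ball x0 ((2:ℝ) ^ (-(m:ℝ)))) u with hGdef
  have hshift : ∀ i : ℕ, (∑' k : ℕ, ENNReal.ofReal ((2:ℝ) ^ (((k:ℝ) + (i:ℝ)) * (1 - α))) *
      ⨆ x0 : EuclideanSpace ℝ (Fin d), zygmundSemi α (ball x0 ((2:ℝ) ^ (-((k:ℝ) + (i:ℝ))))) u)
      = ∑' k : ℕ, G (k + i) := by
    intro i
    refine tsum_congr fun k => ?_
    simp only [hGdef]
    rw [show ((k + i : ℕ) : ℝ) = (k:ℝ) + (i:ℝ) by push_cast; ring]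
  have htail : Tendsto (fun i : ℕ => ∑' k : ℕ, G (k + i)) atTop (𝓝 0) :=
    ENNReal.tendsto_sum_nat_add G hfin.ne
  have hmul : Tendsto (fun i : ℕ => ENNReal.ofReal 6 * ∑' k : ℕ, G (k + i)) atTop (𝓝 0) := by
    have h := ENNReal.Tendsto.const_mul htail
      (Or.inr (by simp : (ENNReal.ofReal 6) ≠ ⊤))
    simpa using h
  rw [Metric.uniformContinuous_iff]
  intro ε hε
  have hev := hmul.eventually_lt_const
    (show (0:ℝ≥0∞) < ENNReal.ofReal ε from ENNReal.ofReal_pos.mpr hε)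
  obtain ⟨i₀, hi₀lt, hi₀1⟩ := (hev.and (eventually_ge_atTop 1)).exists
  refine ⟨(2:ℝ) ^ (-(i₀:ℝ)), Real.rpow_pos_of_pos two_pos _, ?_⟩
  intro x x' hdist
  rcases eq_or_ne x x' with rfl | hne
  · simpa using hε
  · rw [dist_eq_norm] at hdist
    rw [dist_eq_norm]
    have hr : 0 < ‖x - x'‖ := norm_pos_iff.mpr (sub_ne_zero.mpr hne)
    set r := ‖x - x'‖ with hrdef
    set n : ℤ := Int.log 2 r with hn
    have hlow : (2:ℝ)^n ≤ r := by
      have h := Int.zpow_log_le_self (b := 2) (R := ℝ) (by norm_num) hr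
      rw [← hn] at h
      exact_mod_cast h
    have hhigh : r < (2:ℝ)^(n+1) := by
      have h := Int.lt_zpow_succ_log_self (b := 2) (R := ℝ) (by norm_num) r
      rw [← hn] at h
      exact_mod_cast h
    have hδ : ((2:ℝ)^(-(i₀:ℝ))) = (2:ℝ)^((-(i₀:ℤ)) : ℤ) := by
      rw [← Real.rpow_intCast]
      congr 1
      push_cast
      ring
    have hup' : r < (2:ℝ)^((-(i₀:ℤ)) : ℤ) := by rw [← hδ]; exact hdist
    have hi₀z : (1:ℤ) ≤ (i₀:ℤ) := by exact_mod_cast hi₀1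
    have hn2 : n + 1 ≤ -(i₀:ℤ) := by
      have h1 : (2:ℝ)^n < (2:ℝ)^(-(i₀:ℤ)) := lt_of_le_of_lt hlow hup'
      have h2 := (zpow_lt_zpow_iff_right₀ (by norm_num : (1:ℝ) < 2)).mp h1
      omega
    set i : ℕ := (-(n+1)).toNat with hi
    have hnn : (0:ℤ) ≤ -(n+1) := by omega
    have hiz : (i:ℤ) = -(n+1) := Int.toNat_of_nonneg hnn
    have hii₀ : i₀ ≤ i := by
      have : (i₀:ℤ) ≤ (i:ℤ) := by omega
      exact_mod_cast this
    have hi1 : 1 ≤ i := le_trans hi₀1 hii₀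
    have hir : ((i:ℝ)) = -(n:ℝ) - 1 := by
      have h := congrArg (fun m : ℤ => (m:ℝ)) hiz
      push_cast at h
      linarith
    have hlow' : (2:ℝ)^(-(i:ℝ)-1) ≤ r := by
      have h : (2:ℝ)^(-(i:ℝ)-1) = (2:ℝ)^(n:ℤ) := by
        rw [← Real.rpow_intCast]
        congr 1
        rw [hir]; push_cast; ring
      rw [h]; exact hlow
    have hup'' : r < (2:ℝ)^(-(i:ℝ)) := by
      have h : (2:ℝ)^(-(i:ℝ)) = (2:ℝ)^((n+1:ℤ)) := by
        rw [← Real.rpow_intCast]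
        congr 1
        rw [hir]; push_cast; ring
      rw [h]; exact hhigh
    have hb := part1 i hi1 x x' hlow' hup''
    rw [hshift i] at hb
    have hmono : (∑' k : ℕ, G (k + i)) ≤ ∑' k : ℕ, G (k + i₀) := by
      obtain ⟨m, hm⟩ : ∃ m, i = i₀ + m := ⟨i - i₀, by omega⟩
      have hre : ∀ k : ℕ, G (k + i) = G ((k + m) + i₀) := fun k => by
        congr 1; omega
      rw [tsum_congr hre]
      exact ENNReal.tsum_comp_le_tsum_of_injective (add_left_injective m) _
    have hfinal : ENNReal.ofReal ‖gradient u x - gradient u x'‖ < ENNReal.ofReal ε :=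
      lt_of_le_of_lt (hb.trans (mul_le_mul_right hmono _)) hi₀lt
    exact (ENNReal.ofReal_lt_ofReal_iff hε).mp hfinal
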